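/- Let E be a finite-dimensional real inner product space, μ ≥ 0, T > 0, and f : E → ℝ continuously differentiable and μ-strongly convex. Suppose X : [0,T] → E is continuous and twice continuously differentiable on [0,T), satisfying for all t ∈ (0,T): Ẍ(t) + ((√μ/2)·tanh((√μ/2)·(T−t)) + (3/(T−t))·cothc((√μ/2)·(T−t)))·Ẋ(t) + ∇f(X(t)) = 0. Then the energy function 𝓔(t) = (4/(T−t)²)·cschc²((√μ/2)·(T−t))·(f(X(t)) − f(X(T))) − (8/(T−t)⁴)·cschc⁴((√μ/2)·(T−t))·‖X(t) − X(T)‖² + (8/(T−t)⁴)·cschc²((√μ/2)·(T−t))·cothc²((√μ/2)·(T−t))·‖X(t) + ((T−t)/2)·tanhc((√μ/2)·(T−t))·Ẋ(t) − X(T)‖² is monotonically nonincreasing on [0,T). -/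

import Mathlib

open scoped RealInnerProductSpace Topology

noncomputable def sinhc (x : ℝ) : ℝ := if x = 0 then 1 else Real.sinh x / x
noncomputable def cschc (x : ℝ) : ℝ := 1 / sinhc x
noncomputable def tanhc (x : ℝ) : ℝ := sinhc x / Real.cosh x
noncomputable def cothc (x : ℝ) : ℝ := 1 / tanhc x

lemma sinhc_pos (x : ℝ) : 0 < sinhc x := by
  rw [sinhc]
  split_ifs with h
  · exact one_pos
  · rcases lt_or_gt_of_ne h with h' | h'
    · exact div_pos_of_neg_of_neg (Real.sinh_neg_iff.mpr h') h'
    · exact div_pos (Real.sinh_pos_iff.mpr h') h'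

set_option maxHeartbeats 1000000 in
lemma core_deriv {E : Type*} [NormedAddCommGroup E] [InnerProductSpace ℝ E]
    (s : ℝ) (P Q : ℝ → ℝ) (X X' : ℝ → E) (g xT : E) (fX : ℝ → ℝ) (t : ℝ)
    (hP : HasDerivAt P (-Q t) t) (hQ : HasDerivAt Q (-(s ^ 2 * P t)) t)
    (hPQ : Q t ^ 2 = 1 + s ^ 2 * P t ^ 2) (hP0 : 0 < P t) (hQ0 : 0 < Q t)
    (hX : HasDerivAt X (X' t) t)
    (hX' : HasDerivAt X' (-((s ^ 2 * P t / Q t + 3 * Q t / P t) • X' t) - g) t)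
    (hfX : HasDerivAt fX (⟪g, X' t⟫) t)
    (hconv : fX t ≤ ⟪X t - xT, g⟫ - 2 * s ^ 2 * ⟪X t - xT, X t - xT⟫) :
    ∃ d ≤ 0, HasDerivAt (fun u => 4 / P u ^ 2 * fX u
      - 8 / P u ^ 4 * ⟪X u - xT, X u - xT⟫
      + 8 * Q u ^ 2 / P u ^ 4 * ⟪X u + (P u / (2 * Q u)) • X' u - xT,
          X u + (P u / (2 * Q u)) • X' u - xT⟫) d t := by
  have hPne : P t ≠ 0 := hP0.ne'
  have hQne : Q t ≠ 0 := hQ0.ne'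
  have hs2 : s ^ 2 = (Q t ^ 2 - 1) / P t ^ 2 := by
    field_simp
    linarith [hPQ]
  -- derivative of the weight w = P/(2Q)
  have hw : HasDerivAt (fun u => P u / (2 * Q u))
      ((-Q t * (2 * Q t) - P t * (2 * -(s ^ 2 * P t))) / (2 * Q t) ^ 2) t :=
    hP.div (hQ.const_mul 2) (by simpa using hQne)
  -- derivative of V
  have hVraw : HasDerivAt (fun u => X u + (P u / (2 * Q u)) • X' u - xT)
      (X' t + ((P t / (2 * Q t)) • (-((s ^ 2 * P t / Q t + 3 * Q t / P t) • X' t) - g)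
        + ((-Q t * (2 * Q t) - P t * (2 * -(s ^ 2 * P t))) / (2 * Q t) ^ 2) • X' t)) t :=
    (hX.add (hw.smul hX')).sub_const xT
  have hV : HasDerivAt (fun u => X u + (P u / (2 * Q u)) • X' u - xT)
      (-(X' t) - (P t / (2 * Q t)) • g) t := by
    convert hVraw using 1
    have hc : (1 : ℝ) + ((-Q t * (2 * Q t) - P t * (2 * -(s ^ 2 * P t))) / (2 * Q t) ^ 2)
        - (P t / (2 * Q t)) * (s ^ 2 * P t / Q t + 3 * Q t / P t) = -1 := by
      rw [hs2]; field_simp; ring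
    have expand : X' t + ((P t / (2 * Q t)) • (-((s ^ 2 * P t / Q t + 3 * Q t / P t) • X' t) - g)
        + ((-Q t * (2 * Q t) - P t * (2 * -(s ^ 2 * P t))) / (2 * Q t) ^ 2) • X' t)
        = ((1 : ℝ) + ((-Q t * (2 * Q t) - P t * (2 * -(s ^ 2 * P t))) / (2 * Q t) ^ 2)
            - (P t / (2 * Q t)) * (s ^ 2 * P t / Q t + 3 * Q t / P t)) • X' t
          - (P t / (2 * Q t)) • g := by
      module
    rw [expand, hc]
    module
  -- derivatives of scalar coefficient functions
  have hA : HasDerivAt (fun u => 4 / P u ^ 2)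
      ((0 * P t ^ 2 - 4 * ((2 : ℕ) * P t ^ 1 * -Q t)) / (P t ^ 2) ^ 2) t :=
    (hasDerivAt_const t (4 : ℝ)).div (hP.pow 2) (pow_ne_zero _ hPne)
  have hB : HasDerivAt (fun u => 8 / P u ^ 4)
      ((0 * P t ^ 4 - 8 * ((4 : ℕ) * P t ^ 3 * -Q t)) / (P t ^ 4) ^ 2) t :=
    (hasDerivAt_const t (8 : ℝ)).div (hP.pow 4) (pow_ne_zero _ hPne)
  have hC : HasDerivAt (fun u => 8 * Q u ^ 2 / P u ^ 4)
      ((8 * ((2 : ℕ) * Q t ^ 1 * -(s ^ 2 * P t)) * P t ^ 4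
        - 8 * Q t ^ 2 * ((4 : ℕ) * P t ^ 3 * -Q t)) / (P t ^ 4) ^ 2) t :=
    ((hQ.pow 2).const_mul 8).div (hP.pow 4) (pow_ne_zero _ hPne)
  have huu : HasDerivAt (fun u => ⟪X u - xT, X u - xT⟫)
      (⟪X t - xT, X' t⟫ + ⟪X' t, X t - xT⟫) t :=
    (hX.sub_const xT).inner ℝ (hX.sub_const xT)
  have hVV : HasDerivAt (fun u => ⟪X u + (P u / (2 * Q u)) • X' u - xT,
        X u + (P u / (2 * Q u)) • X' u - xT⟫)
      (⟪X t + (P t / (2 * Q t)) • X' t - xT, -(X' t) - (P t / (2 * Q t)) • g⟫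
        + ⟪-(X' t) - (P t / (2 * Q t)) • g, X t + (P t / (2 * Q t)) • X' t - xT⟫) t :=
    hV.inner ℝ hV
  have hG := ((hA.mul hfX).sub (hB.mul huu)).add (hC.mul hVV)
  refine ⟨8 * Q t / P t ^ 3 * (fX t - ⟪X t - xT, g⟫ + 2 * s ^ 2 * ⟪X t - xT, X t - xT⟫)
      - 4 * s ^ 2 / (P t * Q t) * ⟪X' t, X' t⟫, ?_, ?_⟩
  · have h1 : (0 : ℝ) < 8 * Q t / P t ^ 3 := by positivity
    have h2 : fX t - ⟪X t - xT, g⟫ + 2 * s ^ 2 * ⟪X t - xT, X t - xT⟫ ≤ 0 := by linarith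
    have h3 : (0 : ℝ) ≤ 4 * s ^ 2 / (P t * Q t) := by positivity
    have h4 : (0 : ℝ) ≤ ⟪X' t, X' t⟫ := real_inner_self_nonneg
    nlinarith
  · refine hG.congr_deriv ?_
    simp only [inner_add_left, inner_add_right, inner_sub_left, inner_sub_right,
      inner_neg_left, inner_neg_right, real_inner_smul_left, real_inner_smul_right]
    simp only [real_inner_comm (X' t) (X t), real_inner_comm xT (X t),
      real_inner_comm xT (X' t), real_inner_comm g (X t), real_inner_comm g (X' t),
      real_inner_comm g xT]
    rw [hs2]
    field_simp
    ring

set_option maxHeartbeats 1000000 in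
theorem unified_nag_g_ode_lyapunov
    {E : Type*} [NormedAddCommGroup E] [InnerProductSpace ℝ E] [FiniteDimensional ℝ E]
    (μ T : ℝ) (hμ : 0 ≤ μ) (hT : 0 < T)
    (f : E → ℝ) (hf : ContDiff ℝ 1 f)
    (hsc : ∀ x y : E, f x + ⟪gradient f x, y - x⟫ + μ / 2 * ‖y - x‖ ^ 2 ≤ f y)
    (X : ℝ → E)
    (hXcont : ContinuousOn X (Set.Icc 0 T))
    (hX : ContDiffOn ℝ 2 X (Set.Ico 0 T))
    (hode : ∀ t ∈ Set.Ioo (0 : ℝ) T,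
      derivWithin (derivWithin X (Set.Ico 0 T)) (Set.Ico 0 T) t
        + (Real.sqrt μ / 2 * Real.tanh (Real.sqrt μ / 2 * (T - t))
            + 3 / (T - t) * cothc (Real.sqrt μ / 2 * (T - t))) •
          derivWithin X (Set.Ico 0 T) t
        + gradient f (X t) = 0) :
    AntitoneOn (fun t =>
      4 / (T - t) ^ 2 * cschc (Real.sqrt μ / 2 * (T - t)) ^ 2 * (f (X t) - f (X T))
        - 8 / (T - t) ^ 4 * cschc (Real.sqrt μ / 2 * (T - t)) ^ 4 * ‖X t - X T‖ ^ 2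
        + 8 / (T - t) ^ 4 * cschc (Real.sqrt μ / 2 * (T - t)) ^ 2 *
            cothc (Real.sqrt μ / 2 * (T - t)) ^ 2 *
            ‖X t + ((T - t) / 2 * tanhc (Real.sqrt μ / 2 * (T - t))) •
              derivWithin X (Set.Ico 0 T) t - X T‖ ^ 2)
      (Set.Ico 0 T) := by
  have hs0 : (0 : ℝ) ≤ Real.sqrt μ / 2 := by positivity
  set s : ℝ := Real.sqrt μ / 2 with hs_def
  have hs2 : s ^ 2 = μ / 4 := by
    rw [hs_def, div_pow, Real.sq_sqrt hμ]; norm_num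
  set X' : ℝ → E := derivWithin X (Set.Ico 0 T) with hX'def
  set Q : ℝ → ℝ := fun u => Real.cosh (s * (T - u)) with hQdef
  have hQval : ∀ u, Q u = Real.cosh (s * (T - u)) := fun _ => rfl
  have hQpos : ∀ u, 0 < Q u := fun u => by rw [hQval]; exact Real.cosh_pos _
  have hlin : ∀ u : ℝ, HasDerivAt (fun v : ℝ => s * (T - v)) (-s) u := by
    intro u
    simpa using ((hasDerivAt_id u).const_sub T).const_mul s
  obtain ⟨P, hPval, hPderiv, hsP⟩ :
      ∃ P : ℝ → ℝ, (∀ u, P u = (T - u) * sinhc (s * (T - u)))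
        ∧ (∀ u, HasDerivAt P (-Q u) u) ∧ (∀ u, s * P u = Real.sinh (s * (T - u))) := by
    rcases eq_or_lt_of_le hs0 with h0 | hpos
    · refine ⟨fun u => T - u, fun u => ?_, fun u => ?_, fun u => ?_⟩
      · rw [← h0]; simp [sinhc]
      · have : Q u = 1 := by rw [hQval, ← h0]; simp
        rw [this]
        simpa using (hasDerivAt_id u).const_sub T
      · rw [← h0]; simp
    · refine ⟨fun u => Real.sinh (s * (T - u)) / s, fun u => ?_, fun u => ?_, fun u => ?_⟩
      · rcases eq_or_ne u T with rfl | hu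
        · simp [sinhc]
        · have hne : s * (T - u) ≠ 0 :=
            mul_ne_zero hpos.ne' (sub_ne_zero.mpr (fun h => hu (by linarith)))
          rw [sinhc, if_neg hne]
          field_simp
      · have h := ((Real.hasDerivAt_sinh (s * (T - u))).comp u (hlin u)).div_const s
        refine h.congr_deriv ?_
        rw [hQval]
        field_simp
      · field_simp
  have hQderiv : ∀ u, HasDerivAt Q (-(s ^ 2 * P u)) u := by
    intro u
    have h := (Real.hasDerivAt_cosh (s * (T - u))).comp u (hlin u)
    have : -(s ^ 2 * P u) = Real.sinh (s * (T - u)) * -s := by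
      rw [← hsP u]; ring
    rw [this]
    exact h
  have hPQ : ∀ u, Q u ^ 2 = 1 + s ^ 2 * P u ^ 2 := by
    intro u
    have h1 : s ^ 2 * P u ^ 2 = Real.sinh (s * (T - u)) ^ 2 := by rw [← hsP u]; ring
    rw [hQval, Real.cosh_sq, h1]; ring
  have hPpos : ∀ u, u < T → 0 < P u := by
    intro u hu
    rw [hPval]
    exact mul_pos (by linarith) (sinhc_pos _)
  have hPcont : Continuous P := by
    have : Differentiable ℝ P := fun u => (hPderiv u).differentiableAt
    exact this.continuous
  have hQcont : Continuous Q := by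
    have : Differentiable ℝ Q := fun u => (hQderiv u).differentiableAt
    exact this.continuous
  have hX'cd : ContDiffOn ℝ 1 X' (Set.Ico 0 T) :=
    hX.derivWithin (uniqueDiffOn_Ico 0 T) (by norm_num)
  -- identities towards rewriting the energy
  have hsinhc : ∀ u, u < T → sinhc (s * (T - u)) = P u / (T - u) := by
    intro u hu
    have hτ : T - u ≠ 0 := by intro h; linarith [sub_eq_zero.mp h]
    rw [hPval]
    field_simp
  have hcschc : ∀ u, u < T → cschc (s * (T - u)) = (T - u) / P u := by
    intro u hu
    rw [cschc, hsinhc u hu, one_div_div]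
  have hcothc : ∀ u, u < T → cothc (s * (T - u)) = (T - u) * Q u / P u := by
    intro u hu
    have hτ : T - u ≠ 0 := by intro h; linarith [sub_eq_zero.mp h]
    have hP : P u ≠ 0 := (hPpos u hu).ne'
    have hQ : Real.cosh (s * (T - u)) ≠ 0 := (hQpos u).ne'
    rw [cothc, tanhc, hsinhc u hu, ← hQval]
    field_simp
  have htanhc : ∀ u, u < T → (T - u) / 2 * tanhc (s * (T - u)) = P u / (2 * Q u) := by
    intro u hu
    have hτ : T - u ≠ 0 := by intro h; linarith [sub_eq_zero.mp h]
    have hQ : Real.cosh (s * (T - u)) ≠ 0 := (hQpos u).ne'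
    rw [tanhc, hsinhc u hu, ← hQval]
    field_simp
  set G : ℝ → ℝ := fun u =>
    4 / P u ^ 2 * (f (X u) - f (X T)) - 8 / P u ^ 4 * ⟪X u - X T, X u - X T⟫
      + 8 * Q u ^ 2 / P u ^ 4 * ⟪X u + (P u / (2 * Q u)) • X' u - X T,
          X u + (P u / (2 * Q u)) • X' u - X T⟫ with hGdef
  have hEq : ∀ u ∈ Set.Ico (0 : ℝ) T,
      4 / (T - u) ^ 2 * cschc (s * (T - u)) ^ 2 * (f (X u) - f (X T))
        - 8 / (T - u) ^ 4 * cschc (s * (T - u)) ^ 4 * ‖X u - X T‖ ^ 2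
        + 8 / (T - u) ^ 4 * cschc (s * (T - u)) ^ 2 * cothc (s * (T - u)) ^ 2 *
            ‖X u + ((T - u) / 2 * tanhc (s * (T - u))) • X' u - X T‖ ^ 2 = G u := by
    intro u hu
    have hτ : (0 : ℝ) < T - u := by have := hu.2; linarith
    have hP : P u ≠ 0 := (hPpos u hu.2).ne'
    have hQ : Q u ≠ 0 := (hQpos u).ne'
    rw [hcschc u hu.2, hcothc u hu.2, htanhc u hu.2, hGdef]
    rw [← real_inner_self_eq_norm_sq, ← real_inner_self_eq_norm_sq]
    field_simp
  -- pointwise derivative bound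
  have hcore : ∀ t ∈ Set.Ioo (0 : ℝ) T, ∃ d ≤ 0, HasDerivAt G d t := by
    intro t ht
    have htmem : t ∈ Set.Ico (0 : ℝ) T := ⟨ht.1.le, ht.2⟩
    have hnhds : Set.Ico (0 : ℝ) T ∈ 𝓝 t := Ico_mem_nhds_iff.mpr ht
    have hXd : HasDerivAt X (X' t) t := by
      have h := ((hX.differentiableOn (by norm_num)).differentiableAt hnhds).hasDerivAt
      rwa [hX'def, derivWithin_of_mem_nhds hnhds]
    have hX'd : HasDerivAt X' (derivWithin X' (Set.Ico 0 T) t) t := by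
      have h := ((hX'cd.differentiableOn one_ne_zero).differentiableAt hnhds).hasDerivAt
      rwa [derivWithin_of_mem_nhds hnhds]
    have hcoeff : s * Real.tanh (s * (T - t)) + 3 / (T - t) * cothc (s * (T - t))
        = s ^ 2 * P t / Q t + 3 * Q t / P t := by
      have hτ : T - t ≠ 0 := by have := ht.2; intro h; linarith [sub_eq_zero.mp h]
      have hP : P t ≠ 0 := (hPpos t ht.2).ne'
      have hQ : Q t ≠ 0 := (hQpos t).ne'
      rw [hcothc t ht.2, Real.tanh_eq_sinh_div_cosh, ← hsP t, ← hQval]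
      field_simp
    have hX'ode : HasDerivAt X'
        (-((s ^ 2 * P t / Q t + 3 * Q t / P t) • X' t) - gradient f (X t)) t := by
      have h := hode t ht
      rw [hcoeff] at h
      have h2 : derivWithin X' (Set.Ico 0 T) t
          = -((s ^ 2 * P t / Q t + 3 * Q t / P t) • X' t) - gradient f (X t) := by
        rw [add_assoc] at h
        have := eq_neg_of_add_eq_zero_left h
        rw [this, neg_add]
        abel
      rwa [h2] at hX'd
    have hfXd : HasDerivAt (fun u => f (X u) - f (X T)) ⟪gradient f (X t), X' t⟫ t := by
      have hgrad := (hf.differentiable one_ne_zero (X t)).hasGradientAt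
      have h := hgrad.hasFDerivAt.comp_hasDerivAt t hXd
      simpa [InnerProductSpace.toDual_apply_apply] using h.sub_const (f (X T))
    have hconv : f (X t) - f (X T) ≤ ⟪X t - X T, gradient f (X t)⟫
        - 2 * s ^ 2 * ⟪X t - X T, X t - X T⟫ := by
      have h := hsc (X t) (X T)
      have e1 : ⟪gradient f (X t), X T - X t⟫ = -⟪X t - X T, gradient f (X t)⟫ := by
        rw [← neg_sub (X t) (X T), inner_neg_right, real_inner_comm]
      have e2 : ‖X T - X t‖ ^ 2 = ⟪X t - X T, X t - X T⟫ := by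
        rw [norm_sub_rev]
        exact (real_inner_self_eq_norm_sq _).symm
      rw [e1, e2] at h
      rw [hs2]
      linarith
    exact core_deriv s P Q X X' (gradient f (X t)) (X T) (fun u => f (X u) - f (X T)) t
      (hPderiv t) (hQderiv t) (hPQ t) (hPpos t ht.2) (hQpos t) hXd hX'ode hfXd hconv
  -- continuity of G on [0, T)
  have hXc : ContinuousOn X (Set.Ico 0 T) := hXcont.mono Set.Ico_subset_Icc_self
  have hX'c : ContinuousOn X' (Set.Ico 0 T) := hX'cd.continuousOn
  have hPne : ∀ u ∈ Set.Ico (0 : ℝ) T, P u ≠ 0 := fun u hu => (hPpos u hu.2).ne'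
  have hGc : ContinuousOn G (Set.Ico 0 T) := by
    have hfXc : ContinuousOn (fun u => f (X u) - f (X T)) (Set.Ico 0 T) :=
      (hf.continuous.comp_continuousOn hXc).sub continuousOn_const
    have hVc : ContinuousOn (fun u => X u + (P u / (2 * Q u)) • X' u - X T) (Set.Ico 0 T) := by
      refine ContinuousOn.sub (hXc.add (ContinuousOn.smul ?_ hX'c)) continuousOn_const
      exact (hPcont.continuousOn).div ((continuous_const.mul hQcont).continuousOn)
        (fun u _ => by have := hQpos u; positivity)
    refine ContinuousOn.add (ContinuousOn.sub (ContinuousOn.mul ?_ hfXc)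
      (ContinuousOn.mul ?_ (ContinuousOn.inner (hXc.sub continuousOn_const) (hXc.sub continuousOn_const))))
      (ContinuousOn.mul ?_ (ContinuousOn.inner hVc hVc))
    · exact continuousOn_const.div ((hPcont.pow 2).continuousOn)
        (fun u hu => pow_ne_zero _ (hPne u hu))
    · exact continuousOn_const.div ((hPcont.pow 4).continuousOn)
        (fun u hu => pow_ne_zero _ (hPne u hu))
    · exact (continuousOn_const.mul ((hQcont.pow 2).continuousOn)).div ((hPcont.pow 4).continuousOn)
        (fun u hu => pow_ne_zero _ (hPne u hu))
  have hGanti : AntitoneOn G (Set.Ico 0 T) := by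
    apply antitoneOn_of_deriv_nonpos (convex_Ico 0 T) hGc
    · rw [interior_Ico]
      intro t ht
      obtain ⟨d, _, hd⟩ := hcore t ht
      exact hd.differentiableAt.differentiableWithinAt
    · rw [interior_Ico]
      intro t ht
      obtain ⟨d, hd0, hd⟩ := hcore t ht
      rw [hd.deriv]
      exact hd0
  intro a ha b hb hab
  have h := hGanti ha hb hab
  dsimp only
  rw [hEq a ha, hEq b hb]
  exact h
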